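/- Let f : ℝⁿ × ℝᵐ → ℝ be continuously differentiable such that ∇_y f is Lipschitz in y with constant L_y (uniformly in x). Let 𝒴 ⊆ ℝᵐ be nonempty, closed, convex, ν > L_y, and let y₊ = P_𝒴(y + (1/ν)∇_y f(x, y)). Then f(x, y₊) − f(x, y) ≥ (ν/2)‖y₊ − y‖². -/

import Mathlib

open scoped RealInnerProductSpace

/-- `q` is the Euclidean projection of `p` onto the set `s`. -/
def IsProjOn {E : Type*} [NormedAddCommGroup E] (s : Set E) (p q : E) : Prop :=
  q ∈ s ∧ ∀ w ∈ s, ‖p - q‖ ≤ ‖p - w‖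

set_option maxHeartbeats 1000000 in
theorem stmt1 {n m : ℕ}
    (f : EuclideanSpace ℝ (Fin n) → EuclideanSpace ℝ (Fin m) → ℝ)
    (gy : EuclideanSpace ℝ (Fin n) → EuclideanSpace ℝ (Fin m) → EuclideanSpace ℝ (Fin m))
    (Y : Set (EuclideanSpace ℝ (Fin m)))
    (hYne : Y.Nonempty) (hYcl : IsClosed Y) (hYcv : Convex ℝ Y)
    (Ly ν : ℝ)
    (hgrad : ∀ x y, HasGradientAt (fun y' => f x y') (gy x y) y)
    (hLip : ∀ (x : EuclideanSpace ℝ (Fin n)), ∀ y₁ ∈ Y, ∀ y₂ ∈ Y,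
      ‖gy x y₁ - gy x y₂‖ ≤ Ly * ‖y₁ - y₂‖)
    (hν : Ly < ν)
    (x : EuclideanSpace ℝ (Fin n)) (y yp : EuclideanSpace ℝ (Fin m))
    (hy : y ∈ Y)
    (hproj : IsProjOn Y (y + (1 / ν) • gy x y) yp) :
    f x yp - f x y ≥ (ν / 2) * ‖yp - y‖ ^ 2 := by
  obtain ⟨hyp, hmin⟩ := hproj
  by_cases hd0 : yp = y
  · simp [hd0]
  have hdpos : (0:ℝ) < ‖yp - y‖ := by
    rw [norm_pos_iff]; exact sub_ne_zero.mpr hd0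
  have hLy0 : 0 ≤ Ly := by
    have h := hLip x yp hyp y hy
    nlinarith [norm_nonneg (gy x yp - gy x y)]
  have hν0 : (0:ℝ) < ν := lt_of_le_of_lt hLy0 hν
  set g := gy x y with hg
  set d := yp - y with hdef
  set p := y + (1 / ν) • g with hp
  -- Variational inequality from projection
  have hiInf : ‖p - yp‖ = ⨅ w : Y, ‖p - w‖ := by
    haveI : Nonempty Y := ⟨⟨yp, hyp⟩⟩
    refine le_antisymm (le_ciInf fun w => hmin w w.2) ?_
    have hb : BddBelow (Set.range fun w : Y => ‖p - (w : EuclideanSpace ℝ (Fin m))‖) := by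
      refine ⟨0, ?_⟩
      rintro r ⟨w, rfl⟩
      exact norm_nonneg _
    exact ciInf_le hb (⟨yp, hyp⟩ : Y)
  have hVI : ⟪p - yp, y - yp⟫ ≤ 0 :=
    (norm_eq_iInf_iff_real_inner_le_zero hYcv hyp).mp hiInf y hy
  have hkey : ν * ‖d‖ ^ 2 ≤ ⟪g, d⟫ := by
    have hexp : ⟪p - yp, y - yp⟫ = ‖d‖ ^ 2 - (1 / ν) * ⟪g, d⟫ := by
      have : p - yp = (y - yp) + (1 / ν) • g := by rw [hp]; abel
      rw [this, inner_add_left, real_inner_smul_left,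
        real_inner_self_eq_norm_sq]
      have : y - yp = -d := by rw [hdef]; abel
      rw [this, inner_neg_right, norm_neg]
      ring
    rw [hexp] at hVI
    have h1 : ‖d‖ ^ 2 ≤ 1 / ν * ⟪g, d⟫ := by linarith
    have h2 := mul_le_mul_of_nonneg_left h1 hν0.le
    have h3 : ν * (1 / ν * ⟪g, d⟫) = ⟪g, d⟫ := by field_simp
    linarith
  -- descent lemma along the segment
  have hseg : ∀ t ∈ Set.Icc (0:ℝ) 1, y + t • d ∈ Y := by
    intro t ht
    have := hYcv hy hyp (by linarith [ht.1, ht.2] : (0:ℝ) ≤ 1 - t) ht.1 (by ring)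
    convert this using 1
    rw [hdef]
    module
  have hderiv : ∀ t : ℝ, HasDerivAt (fun t : ℝ => f x (y + t • d))
      (⟪gy x (y + t • d), d⟫) t := by
    intro t
    have h1 : HasDerivAt (fun t : ℝ => y + t • d) d t := by
      simpa using ((hasDerivAt_id t).smul_const d).const_add y
    have h2 := ((hgrad x (y + t • d)).hasFDerivAt).comp_hasDerivAt t h1
    exact h2
  have hcont : ContinuousOn (fun t : ℝ => ⟪gy x (y + t • d), d⟫) (Set.Icc 0 1) := by
    have hlip : LipschitzOnWith (Real.toNNReal (Ly * ‖d‖))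
        (fun t : ℝ => gy x (y + t • d)) (Set.Icc 0 1) := by
      rw [lipschitzOnWith_iff_dist_le_mul]
      intro s hs t ht
      have h := hLip x _ (hseg s hs) _ (hseg t ht)
      have he : (y + s • d) - (y + t • d) = (s - t) • d := by module
      rw [dist_eq_norm, dist_eq_norm]
      calc ‖gy x (y + s • d) - gy x (y + t • d)‖ ≤ Ly * ‖(y + s • d) - (y + t • d)‖ := h
        _ = Real.toNNReal (Ly * ‖d‖) * ‖s - t‖ := by
            rw [he]
            rw [norm_smul, Real.coe_toNNReal _ (by positivity)]
            simp [Real.norm_eq_abs]; ring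
    exact (hlip.continuousOn).inner continuousOn_const
  have hint : IntervalIntegrable (fun t : ℝ => ⟪gy x (y + t • d), d⟫)
      MeasureTheory.volume 0 1 := by
    apply ContinuousOn.intervalIntegrable
    rwa [Set.uIcc_of_le (by norm_num : (0:ℝ) ≤ 1)]
  have hftc : f x yp - f x y = ∫ t in (0:ℝ)..1, ⟪gy x (y + t • d), d⟫ := by
    have := intervalIntegral.integral_eq_sub_of_hasDerivAt
      (f := fun t : ℝ => f x (y + t • d)) (fun t _ => hderiv t) hint
    rw [this]
    congr 1 <;> simp [hdef]
  have hlow : ∀ t ∈ Set.Icc (0:ℝ) 1,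
      ⟪g, d⟫ - Ly * ‖d‖ ^ 2 * t ≤ ⟪gy x (y + t • d), d⟫ := by
    intro t ht
    have h1 : ⟪gy x (y + t • d), d⟫ = ⟪g, d⟫ + ⟪gy x (y + t • d) - g, d⟫ := by
      rw [inner_sub_left]; ring
    have h2 : |⟪gy x (y + t • d) - g, d⟫| ≤ Ly * ‖d‖ ^ 2 * t := by
      calc |⟪gy x (y + t • d) - g, d⟫| ≤ ‖gy x (y + t • d) - g‖ * ‖d‖ :=
            abs_real_inner_le_norm _ _
        _ ≤ (Ly * ‖(y + t • d) - y‖) * ‖d‖ := by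
            have := hLip x _ (hseg t ht) y hy
            exact mul_le_mul_of_nonneg_right this (norm_nonneg _)
        _ = Ly * ‖d‖ ^ 2 * t := by
            have : (y + t • d) - y = t • d := by module
            rw [this, norm_smul, Real.norm_eq_abs, abs_of_nonneg ht.1]
            ring
    rw [h1]
    have := abs_le.mp h2
    linarith [this.1]
  have hmono : (∫ t in (0:ℝ)..1, (⟪g, d⟫ - Ly * ‖d‖ ^ 2 * t))
      ≤ ∫ t in (0:ℝ)..1, ⟪gy x (y + t • d), d⟫ := by
    apply intervalIntegral.integral_mono_on (by norm_num) _ hint hlow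
    apply Continuous.intervalIntegrable
    continuity
  have hcomp : (∫ t in (0:ℝ)..1, (⟪g, d⟫ - Ly * ‖d‖ ^ 2 * t))
      = ⟪g, d⟫ - Ly / 2 * ‖d‖ ^ 2 := by
    rw [intervalIntegral.integral_sub intervalIntegrable_const
      (by apply Continuous.intervalIntegrable; continuity)]
    rw [intervalIntegral.integral_const_mul, integral_id]
    simp
    ring
  rw [ge_iff_le, hftc]
  calc ν / 2 * ‖yp - y‖ ^ 2 ≤ ⟪g, d⟫ - Ly / 2 * ‖d‖ ^ 2 := by
        rw [← hdef]; nlinarith [hkey, sq_nonneg ‖d‖]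
    _ = ∫ t in (0:ℝ)..1, (⟪g, d⟫ - Ly * ‖d‖ ^ 2 * t) := hcomp.symm
    _ ≤ _ := hmono
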